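/- arXiv:2104.07369 — 2 statements merged into one kernel-verified Lean document; each statement's English description precedes it below -/
import Mathlib

section
/- Let w be a packed word of length n and let 1 ≤ c ≤ n−1. Then c is a global descent of w if and only if there exist (necessarily unique) nonempty packed words u and v with |u| = c and w = u/v. In particular, for any nonempty packed words u and v, the word u/v is packed and |u| is a global descent of u/v. -/
def wmax (w : List ℕ) : ℕ := w.foldr max 0

def IsPacked (w : List ℕ) : Prop :=
  (∀ x ∈ w, 0 < x) ∧ ∀ i : ℕ, 0 < i → i ≤ wmax w → i ∈ w

def shiftW (m : ℕ) (w : List ℕ) : List ℕ := w.map (· + m)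

def slash (u v : List ℕ) : List ℕ := shiftW (wmax v) u ++ v

def GlobalDescent (w : List ℕ) (c : ℕ) : Prop :=
  1 ≤ c ∧ c + 1 ≤ w.length ∧ ∀ a ∈ w.take c, ∀ b ∈ w.drop c, b < a

lemma le_wmax {x : ℕ} {w : List ℕ} (h : x ∈ w) : x ≤ wmax w := by
  induction w with
  | nil => simp at h
  | cons a t ih =>
    rcases List.mem_cons.mp h with rfl | h
    · exact le_max_left _ _
    · exact le_trans (ih h) (le_max_right a (wmax t))

lemma wmax_mem {w : List ℕ} (h : w ≠ []) : wmax w ∈ w := by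
  induction w with
  | nil => simp at h
  | cons a t ih =>
    rcases eq_or_ne t [] with rfl | ht
    · simp [wmax]
    · have := ih ht
      by_cases hle : wmax t ≤ a
      · have : wmax (a :: t) = a := by
          show max a (wmax t) = a; omega
        simp [this]
      · have : wmax (a :: t) = wmax t := by
          show max a (wmax t) = wmax t; omega
        simp [this, ih ht]

lemma wmax_shift {w : List ℕ} (h : w ≠ []) (m : ℕ) :
    wmax (shiftW m w) = wmax w + m := by
  induction w with
  | nil => simp at h
  | cons a t ih =>
    rcases eq_or_ne t [] with rfl | ht
    · simp [shiftW, wmax]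
    · have := ih ht
      show max (a + m) (wmax (shiftW m t)) = max a (wmax t) + m
      omega

lemma wmax_append (a b : List ℕ) : wmax (a ++ b) = max (wmax a) (wmax b) := by
  induction a with
  | nil => simp [wmax]
  | cons x t ih =>
    show max x (wmax (t ++ b)) = max (max x (wmax t)) (wmax b)
    rw [ih]; omega

lemma packed_slash {u v : List ℕ} (hu : IsPacked u) (hv : IsPacked v)
    (hune : u ≠ []) : IsPacked (slash u v) := by
  set m := wmax v with hm
  have hwm : wmax (slash u v) = wmax u + m := by
    rw [slash, wmax_append, wmax_shift hune]
    omega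
  constructor
  · intro x hx
    rcases List.mem_append.mp hx with hx | hx
    · rcases List.mem_map.mp hx with ⟨y, hy, rfl⟩
      have := hu.1 y hy; omega
    · exact hv.1 x hx
  · intro i hi hile
    rw [hwm] at hile
    by_cases hle : i ≤ m
    · exact List.mem_append.mpr (Or.inr (hv.2 i hi hle))
    · have h1 : i - m ∈ u := hu.2 (i - m) (by omega) (by omega)
      refine List.mem_append.mpr (Or.inl ?_)
      exact List.mem_map.mpr ⟨i - m, h1, by omega⟩

lemma gd_slash {u v : List ℕ} (hu : IsPacked u) (hv : IsPacked v)
    (hune : u ≠ []) (hvne : v ≠ []) : GlobalDescent (slash u v) u.length := by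
  have hlen : (shiftW (wmax v) u).length = u.length := List.length_map _
  refine ⟨?_, ?_, ?_⟩
  · cases u with
    | nil => exact absurd rfl hune
    | cons a t => simp
  · have : 1 ≤ v.length := List.length_pos_iff.mpr hvne
    simp [slash, hlen]; omega
  · intro a ha b hb
    rw [slash, List.take_left' hlen] at ha
    rw [slash, List.drop_left' hlen] at hb
    rcases List.mem_map.mp ha with ⟨y, hy, rfl⟩
    have h1 := hu.1 y hy
    have h2 := le_wmax hb
    omega

theorem globalDescent_iff_slash_factorization :
    (∀ (w : List ℕ) (c : ℕ), IsPacked w → 1 ≤ c → c + 1 ≤ w.length →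
      (GlobalDescent w c ↔
        ∃! p : List ℕ × List ℕ,
          IsPacked p.1 ∧ IsPacked p.2 ∧ p.1 ≠ [] ∧ p.2 ≠ [] ∧
          p.1.length = c ∧ w = slash p.1 p.2)) ∧
    (∀ u v : List ℕ, IsPacked u → IsPacked v → u ≠ [] → v ≠ [] →
      IsPacked (slash u v) ∧ GlobalDescent (slash u v) u.length) := by
  constructor
  · intro w c hp hc hcl
    constructor
    · rintro ⟨-, -, hgd⟩
      set v := w.drop c with hv
      set m := wmax v with hm
      set t := w.take c with ht
      set u := t.map (· - m) with hudef
      have hvne : v ≠ [] := by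
        have : v.length = w.length - c := List.length_drop
        intro h; rw [h] at this; simp at this; omega
      have htne : t ≠ [] := by
        have : t.length = c := List.length_take_of_le (by omega)
        intro h; rw [h] at this; simp at this; omega
      have htw : w = t ++ v := (List.take_append_drop c w).symm
      -- every letter of t exceeds m
      have hbig : ∀ a ∈ t, m < a := by
        intro a ha
        exact hgd a ha m (wmax_mem hvne)
      have hshift : shiftW m u = t := by
        rw [hudef, shiftW, List.map_map]
        conv_rhs => rw [← List.map_id t]
        apply List.map_congr_left
        intro a ha
        have := hbig a ha
        simp; omega
      have hune : u ≠ [] := by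
        intro h; rw [h] at hshift; simp [shiftW] at hshift; exact htne hshift
      have hwmaxt : wmax t = wmax u + m := by rw [← hshift, wmax_shift hune]
      have hwmaxw : wmax w = wmax u + m := by
        rw [htw, wmax_append, hwmaxt]
        have : m < wmax t := by
          have := hbig (wmax t) (wmax_mem htne)
          omega
        omega
      have hvsub : ∀ x ∈ v, x ∈ w := by
        intro x hx; rw [htw]; exact List.mem_append.mpr (Or.inr hx)
      have hvp : IsPacked v := by
        constructor
        · intro x hx; exact hp.1 x (hvsub x hx)
        · intro i hi hile
          have hiw : i ∈ w := hp.2 i hi (by omega)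
          rw [htw] at hiw
          rcases List.mem_append.mp hiw with h | h
          · exact absurd (hbig i h) (by omega)
          · exact h
      have hup : IsPacked u := by
        constructor
        · intro x hx
          rcases List.mem_map.mp hx with ⟨y, hy, rfl⟩
          have := hbig y hy; omega
        · intro i hi hile
          have him : i + m ∈ w := hp.2 (i + m) (by omega) (by omega)
          rw [htw] at him
          rcases List.mem_append.mp him with h | h
          · exact List.mem_map.mpr ⟨i + m, h, by simp⟩
          · have := le_wmax h; omega
      have hulen : u.length = c := by
        rw [hudef, List.length_map, ht, List.length_take_of_le (by omega)]
      refine ⟨(u, v), ⟨hup, hvp, hune, hvne, hulen, ?_⟩, ?_⟩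
      · rw [slash, ← hm, hshift, htw]
      · rintro ⟨u', v'⟩ ⟨hu', hv', hu'ne, hv'ne, hu'len, heq⟩
        simp only at hu' hv' hu'ne hv'ne hu'len heq
        have hlen2 : (shiftW (wmax v') u').length = c := by
          rw [shiftW, List.length_map, hu'len]
        have hv'eq : v = v' := by rw [hv, heq, slash, List.drop_left' hlen2]
        have hmm : wmax v' = m := by rw [hm, hv'eq]
        have ht'eq : t = shiftW m u' := by
          rw [ht, heq, slash, List.take_left' hlen2, hmm]
        have hu'eq : u' = u := by
          have h1 : List.map (· - m) (shiftW m u') = u' := by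
            rw [shiftW, List.map_map]
            conv_rhs => rw [← List.map_id u']
            apply List.map_congr_left; intro a _; simp
          rw [← h1, ← ht'eq, hudef]
        refine Prod.ext ?_ ?_ <;> simp [hu'eq, hv'eq.symm]
    · rintro ⟨⟨u, v⟩, ⟨hu, hv, hune, hvne, hlen, heq⟩, -⟩
      rw [heq, ← hlen]
      exact gd_slash hu hv hune hvne
  · intro u v hu hv hune hvne
    exact ⟨packed_slash hu hv hune, gd_slash hu hv hune hvne⟩
end

section
/- Let w be a nonempty irreducible packed word. Among all factorizations w = u ▶ φ_I(v) with u, v packed words and I a nonempty set of positions of φ_I(v), there is exactly one in which the length of u is maximal. Moreover, in this factorization, writing I = {i_1 < ⋯ < i_p}: either v = ε and I = {1,…,p}; or, writing v = v_1/⋯/v_r for the factorization of v into irreducible packed words, one has i_1 ≤ |v_1| and (|v| + p) + 1 − i_p ≤ |v_r|. -/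
/-- Iterated left-shifted concatenation `w₁ / w₂ / ⋯ / w_k`. -/
def slashAll (l : List (List ℕ)) : List ℕ := l.foldr slash []

/-- A packed word is irreducible if it is nonempty and has no global descent. -/
def Irred (w : List ℕ) : Prop :=
  IsPacked w ∧ w ≠ [] ∧ ∀ c, ¬ GlobalDescent w c

/-- `phi I w` inserts occurrences of the new maximum letter `wmax w + 1` so that they
end up exactly at the (1-based) positions in `I`. -/
def phi (I : Finset ℕ) (w : List ℕ) : List ℕ :=
  (List.range (w.length + I.card)).map (fun j =>
    if j + 1 ∈ I then wmax w + 1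
    else w.getD ((List.range j).countP (fun k => decide (k + 1 ∉ I))) 0)

/-- `Fact6 w (u, I, v)` says that `w = u ▶ φ_I(v)` is a factorization as in Lemma 8
(phi_fact): `u` and `v` are packed, `I` is a nonempty set of positions of `φ_I(v)`,
and `u ▶ φ_I(v) = φ_{I + |u|}(u / v)` equals `w`. -/
def Fact6 (w : List ℕ) (t : List ℕ × Finset ℕ × List ℕ) : Prop :=
  IsPacked t.1 ∧ IsPacked t.2.2 ∧ t.2.1.Nonempty ∧
  t.2.1 ⊆ Finset.Icc 1 (t.2.2.length + t.2.1.card) ∧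
  w = phi (t.2.1.image (· + t.1.length)) (slash t.1 t.2.2)

/- ## basic wmax lemmas -/
lemma wmax_nil : wmax [] = 0 := rfl
lemma wmax_cons (a : ℕ) (l : List ℕ) : wmax (a :: l) = max a (wmax l) := rfl

lemma le_wmax_of_mem {a : ℕ} {l : List ℕ} (h : a ∈ l) : a ≤ wmax l := by
  induction l with
  | nil => simp at h
  | cons b t ih =>
    rcases List.mem_cons.1 h with h | h
    · simp [wmax_cons, h]
    · exact le_trans (ih h) (le_max_right _ _) 

lemma wmax_lt_of_forall {a : ℕ} (ha : 0 < a) {l : List ℕ} (h : ∀ b ∈ l, b < a) :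
    wmax l < a := by
  induction l with
  | nil => exact ha
  | cons b t ih =>
    rw [wmax_cons, max_lt_iff]
    exact ⟨h b (by simp), ih fun b hb => h b (by simp [hb])⟩

lemma wmax_le_of_forall {a : ℕ} {l : List ℕ} (h : ∀ b ∈ l, b ≤ a) : wmax l ≤ a := by
  induction l with
  | nil => exact Nat.zero_le _
  | cons b t ih =>
    rw [wmax_cons, max_le_iff]
    exact ⟨h b (by simp), ih fun b hb => h b (by simp [hb])⟩

/- ## shiftW -/
lemma shiftW_nil (m : ℕ) : shiftW m [] = [] := rfl
lemma shiftW_zero (w : List ℕ) : shiftW 0 w = w := by simp [shiftW]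
lemma length_shiftW (m : ℕ) (w : List ℕ) : (shiftW m w).length = w.length := by
  simp [shiftW]
lemma shiftW_shiftW (m k : ℕ) (w : List ℕ) :
    shiftW m (shiftW k w) = shiftW (k + m) w := by
  simp [shiftW, Function.comp, add_assoc]

lemma wmax_shiftW {w : List ℕ} (hw : w ≠ []) (m : ℕ) :
    wmax (shiftW m w) = wmax w + m := by
  induction w with
  | nil => simp at hw
  | cons a t ih =>
    rcases eq_or_ne t [] with rfl | ht
    · simp [shiftW, wmax_cons, wmax_nil]
    · simp only [shiftW, List.map_cons, wmax_cons] at *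
      rw [ih ht]
      omega

/- ## slash -/
lemma slash_nil (u : List ℕ) : slash u [] = u := by
  simp [slash, wmax_nil, shiftW_zero]
lemma nil_slash (v : List ℕ) : slash [] v = v := rfl
lemma length_slash (u v : List ℕ) : (slash u v).length = u.length + v.length := by
  simp [slash, length_shiftW]

lemma wmax_slash {u : List ℕ} (hu : u ≠ []) (v : List ℕ) :
    wmax (slash u v) = wmax u + wmax v := by
  rw [slash, wmax_append, wmax_shiftW hu]
  omega

lemma slash_assoc (a b c : List ℕ) : slash (slash a b) c = slash a (slash b c) := by
  rcases eq_or_ne b [] with rfl | hb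
  · simp [slash_nil, nil_slash]
  · show shiftW (wmax c) (shiftW (wmax b) a ++ b) ++ c = shiftW (wmax (slash b c)) a ++ slash b c
    rw [wmax_slash hb, slash]
    simp only [shiftW, List.map_append, List.map_map, List.append_assoc]
    congr 1
    apply List.map_congr_left
    intro x _
    simp
    omega

lemma isPacked_nil : IsPacked [] := by
  constructor
  · simp
  · intro i hi hle
    simp [wmax_nil] at hle
    omega

lemma IsPacked.slash {u v : List ℕ} (hu : IsPacked u) (hv : IsPacked v) :
    IsPacked (slash u v) := by
  rcases eq_or_ne u [] with rfl | hne
  · simpa [nil_slash]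
  constructor
  · intro x hx
    rcases List.mem_append.1 hx with hx | hx
    · obtain ⟨a, ha, rfl⟩ := List.mem_map.1 hx
      have := hu.1 a ha
      omega
    · exact hv.1 x hx
  · intro i hi hle
    rw [wmax_slash hne] at hle
    rcases le_or_gt i (wmax v) with h | h
    · exact List.mem_append.2 (Or.inr (hv.2 i hi h))
    · refine List.mem_append.2 (Or.inl ?_)
      refine List.mem_map.2 ⟨i - wmax v, hu.2 _ (by omega) (by omega), by omega⟩

lemma isPacked_slashAll {l : List (List ℕ)} (h : ∀ x ∈ l, IsPacked x) :
    IsPacked (slashAll l) := by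
  induction l with
  | nil => exact isPacked_nil
  | cons a t ih =>
    exact (h a (by simp)).slash (ih fun x hx => h x (by simp [hx]))

lemma slashAll_cons (a : List ℕ) (l : List (List ℕ)) :
    slashAll (a :: l) = slash a (slashAll l) := rfl

lemma slashAll_append (l₁ l₂ : List (List ℕ)) :
    slashAll (l₁ ++ l₂) = slash (slashAll l₁) (slashAll l₂) := by
  induction l₁ with
  | nil => simp [slashAll, nil_slash]
  | cons a t ih => simp [slashAll_cons, ih, slash_assoc]

/- ## counting lemmas -/
lemma inter_Icc_succ (J : Finset ℕ) (m : ℕ) :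
    J ∩ Finset.Icc 1 (m + 1) =
      if m + 1 ∈ J then insert (m + 1) (J ∩ Finset.Icc 1 m) else J ∩ Finset.Icc 1 m := by
  split
  · rename_i h
    ext x
    simp only [Finset.mem_inter, Finset.mem_Icc, Finset.mem_insert]
    constructor
    · rintro ⟨hx, h1, h2⟩
      rcases eq_or_ne x (m + 1) with rfl | hne
      · exact Or.inl rfl
      · exact Or.inr ⟨hx, h1, by omega⟩
    · rintro (rfl | ⟨hx, h1, h2⟩)
      · exact ⟨h, by omega, le_refl _⟩
      · exact ⟨hx, h1, by omega⟩
  · rename_i h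
    ext x
    simp only [Finset.mem_inter, Finset.mem_Icc]
    constructor
    · rintro ⟨hx, h1, h2⟩
      rcases eq_or_ne x (m + 1) with rfl | hne
      · exact absurd hx h
      · exact ⟨hx, h1, by omega⟩
    · rintro ⟨hx, h1, h2⟩
      exact ⟨hx, h1, by omega⟩

lemma countP_range_mem (J : Finset ℕ) (m : ℕ) :
    (List.range m).countP (fun k => decide (k + 1 ∈ J)) = (J ∩ Finset.Icc 1 m).card := by
  induction m with
  | zero => simp
  | succ m ih =>
    rw [List.range_succ, List.countP_append, ih, inter_Icc_succ]
    by_cases h : m + 1 ∈ J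
    · rw [if_pos h, Finset.card_insert_of_notMem (by simp [Finset.mem_Icc])]
      simp [List.countP_cons, h]
    · rw [if_neg h]
      simp [List.countP_cons, h]

lemma countP_range_not_mem (J : Finset ℕ) (m : ℕ) :
    (List.range m).countP (fun k => decide (k + 1 ∉ J)) = m - (J ∩ Finset.Icc 1 m).card := by
  have h1 := List.length_eq_countP_add_countP (fun k => decide (k + 1 ∈ J)) (l := List.range m)
  rw [List.length_range] at h1
  rw [countP_range_mem] at h1
  have h2 : (List.range m).countP (fun k => decide (k + 1 ∉ J)) =
      (List.range m).countP (fun k => decide (¬ (decide (k + 1 ∈ J) = true))) := by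
    apply List.countP_congr
    intro a _
    simp
  rw [h2]
  omega

lemma card_inter_Icc_le (J : Finset ℕ) (m : ℕ) : (J ∩ Finset.Icc 1 m).card ≤ m := by
  calc (J ∩ Finset.Icc 1 m).card ≤ (Finset.Icc 1 m).card :=
        Finset.card_le_card (Finset.inter_subset_right)
    _ = m := by rw [Nat.card_Icc]; omega

/- ## phi lemmas -/
lemma length_phi (J : Finset ℕ) (x : List ℕ) : (phi J x).length = x.length + J.card := by
  simp [phi]

lemma phi_getElem (J : Finset ℕ) (x : List ℕ) {i : ℕ} (hi : i < (phi J x).length) :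
    (phi J x)[i] = if i + 1 ∈ J then wmax x + 1
      else x.getD ((List.range i).countP (fun k => decide (k + 1 ∉ J))) 0 := by
  simp [phi]

lemma phi_index_lt {J : Finset ℕ} {x : List ℕ}
    (hJ : J ⊆ Finset.Icc 1 (x.length + J.card)) {i : ℕ}
    (hi : i < x.length + J.card) (hni : i + 1 ∉ J) :
    i - (J ∩ Finset.Icc 1 i).card < x.length := by
  set N := x.length + J.card with hN
  have hsub : J ⊆ (J ∩ Finset.Icc 1 i) ∪ Finset.Icc (i + 2) N := by
    intro j hj
    have hj' := Finset.mem_Icc.1 (hJ hj)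
    rcases le_or_gt j i with h | h
    · exact Finset.mem_union.2 (Or.inl (Finset.mem_inter.2 ⟨hj, Finset.mem_Icc.2 ⟨hj'.1, h⟩⟩))
    · refine Finset.mem_union.2 (Or.inr (Finset.mem_Icc.2 ⟨?_, hj'.2⟩))
      rcases eq_or_ne j (i + 1) with rfl | hne
      · exact absurd hj hni
      · omega
  have h1 : J.card ≤ (J ∩ Finset.Icc 1 i).card + (Finset.Icc (i + 2) N).card :=
    le_trans (Finset.card_le_card hsub) (Finset.card_union_le _ _)
  rw [Nat.card_Icc] at h1
  have h2 := card_inter_Icc_le J i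
  omega

lemma getD_le_wmax (x : List ℕ) (t : ℕ) : x.getD t 0 ≤ wmax x := by
  rcases lt_or_ge t x.length with h | h
  · rw [List.getD_eq_getElem x 0 h]
    exact le_wmax_of_mem (List.getElem_mem h)
  · rw [List.getD_eq_default x 0 h]
    exact Nat.zero_le _

lemma wmax_phi {J : Finset ℕ} {x : List ℕ} (hne : J.Nonempty)
    (hJ : J ⊆ Finset.Icc 1 (x.length + J.card)) :
    wmax (phi J x) = wmax x + 1 := by
  apply le_antisymm
  · apply wmax_le_of_forall
    intro b hb
    obtain ⟨i, hi, rfl⟩ := List.mem_iff_getElem.1 hb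
    rw [phi_getElem _ _ hi]
    split
    · exact le_refl _
    · exact le_trans (getD_le_wmax _ _) (Nat.le_succ _)
  · obtain ⟨j, hj⟩ := hne
    have hj' := Finset.mem_Icc.1 (hJ hj)
    have hlt : j - 1 < (phi J x).length := by rw [length_phi]; omega
    have : (phi J x)[j-1] = wmax x + 1 := by
      rw [phi_getElem _ _ hlt, if_pos (by rw [show j - 1 + 1 = j by omega]; exact hj)]
    rw [← this]
    exact le_wmax_of_mem (List.getElem_mem hlt)

lemma mem_of_phi {J : Finset ℕ} {x : List ℕ}
    (hJ : J ⊆ Finset.Icc 1 (x.length + J.card)) (j : ℕ) :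
    j ∈ J ↔ 1 ≤ j ∧ j ≤ x.length + J.card ∧ (phi J x).getD (j - 1) 0 = wmax x + 1 := by
  constructor
  · intro hj
    have hj' := Finset.mem_Icc.1 (hJ hj)
    have hlt : j - 1 < (phi J x).length := by rw [length_phi]; omega
    refine ⟨hj'.1, hj'.2, ?_⟩
    rw [List.getD_eq_getElem _ 0 hlt, phi_getElem _ _ hlt,
      if_pos (by rw [show j - 1 + 1 = j by omega]; exact hj)]
  · rintro ⟨h1, h2, h3⟩
    by_contra hj
    have hlt : j - 1 < (phi J x).length := by rw [length_phi]; omega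
    rw [List.getD_eq_getElem _ 0 hlt, phi_getElem _ _ hlt,
      if_neg (by rw [show j - 1 + 1 = j by omega]; exact hj)] at h3
    have := getD_le_wmax x ((List.range (j-1)).countP (fun k => decide (k + 1 ∉ J)))
    omega

lemma exists_preimage_count (J : Finset ℕ) :
    ∀ N t, t < (List.range N).countP (fun k => decide (k + 1 ∉ J)) →
      ∃ i, i < N ∧ i + 1 ∉ J ∧ (List.range i).countP (fun k => decide (k + 1 ∉ J)) = t := by
  intro N
  induction N with
  | zero => simp
  | succ N ih =>
    intro t ht
    rw [List.range_succ, List.countP_append] at ht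
    by_cases hN : N + 1 ∈ J
    · have h0 : (List.countP (fun k => decide (k + 1 ∉ J)) [N]) = 0 := by simp [hN]
      rw [h0] at ht
      obtain ⟨i, h1, h2, h3⟩ := ih t (by omega)
      exact ⟨i, by omega, h2, h3⟩
    · have h0 : (List.countP (fun k => decide (k + 1 ∉ J)) [N]) ≤ 1 :=
        le_trans List.countP_le_length (by simp)
      rcases lt_or_ge t ((List.range N).countP (fun k => decide (k + 1 ∉ J))) with h | h
      · obtain ⟨i, h1, h2, h3⟩ := ih t h
        exact ⟨i, by omega, h2, h3⟩
      · refine ⟨N, by omega, hN, ?_⟩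
        omega

lemma phi_unique {J J' : Finset ℕ} {x x' : List ℕ}
    (hJ : J ⊆ Finset.Icc 1 (x.length + J.card))
    (hJ' : J' ⊆ Finset.Icc 1 (x'.length + J'.card))
    (hne : J.Nonempty) (hne' : J'.Nonempty)
    (h : phi J x = phi J' x') : J = J' ∧ x = x' := by
  have hlen : x.length + J.card = x'.length + J'.card := by
    have := congrArg List.length h
    rwa [length_phi, length_phi] at this
  have hM : wmax x = wmax x' := by
    have h1 := wmax_phi hne hJ
    have h2 := wmax_phi hne' hJ'
    rw [h, h2] at h1
    omega
  have hJJ : J = J' := by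
    ext j
    rw [mem_of_phi hJ j, mem_of_phi hJ' j, h, hM, hlen]
  have hcard : J.card = J'.card := by rw [hJJ]
  have hxlen : x.length = x'.length := by omega
  refine ⟨hJJ, ?_⟩
  apply List.ext_getElem hxlen
  intro t h1 h2
  have hcnt : (List.range (x.length + J.card)).countP (fun k => decide (k + 1 ∉ J)) = x.length := by
    rw [countP_range_not_mem, Finset.inter_eq_left.2 hJ]
    omega
  obtain ⟨i, hi, hni, hct⟩ := exists_preimage_count J (x.length + J.card) t (by omega)
  have hilen : i < (phi J x).length := by rw [length_phi]; exact hi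
  have hilen' : i < (phi J' x').length := by rw [length_phi]; omega
  have e1 : (phi J x)[i] = x.getD t 0 := by
    rw [phi_getElem _ _ hilen, if_neg hni, hct]
  have e2 : (phi J' x')[i] = x'.getD t 0 := by
    rw [phi_getElem _ _ hilen', if_neg (by rw [← hJJ]; exact hni), ← hJJ, hct]
  have : x.getD t 0 = x'.getD t 0 := by
    rw [← e1, ← e2]
    exact List.getElem_of_eq h hilen
  rwa [List.getD_eq_getElem _ 0 h1, List.getD_eq_getElem _ 0 h2] at this

/- ## reconstruction -/
lemma filter_getD (p : ℕ → Bool) :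
    ∀ (w : List ℕ) (i : ℕ), i < w.length → p (w.getD i 0) = true →
      (w.filter p).getD ((w.take i).countP p) 0 = w.getD i 0 := by
  intro w
  induction w with
  | nil => intro i hi; simp at hi
  | cons a t ih =>
    intro i hi hp
    cases i with
    | zero =>
      simp only [List.getD_cons_zero] at hp ⊢
      simp [List.filter_cons, hp]
    | succ i =>
      simp only [List.getD_cons_succ] at hp ⊢
      simp only [List.take_succ_cons, List.countP_cons, List.filter_cons]
      by_cases hpa : p a = true
      · simp only [hpa, if_true, List.getD_cons_succ]
        exact ih i (by simpa using Nat.lt_of_succ_lt_succ hi) hp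
      · simp only [hpa, if_false, Nat.add_zero]
        exact ih i (by simpa using Nat.lt_of_succ_lt_succ hi) hp

lemma take_eq_map_range {w : List ℕ} {i : ℕ} (h : i ≤ w.length) :
    w.take i = (List.range i).map (fun k => w.getD k 0) := by
  apply List.ext_getElem
  · simpa using h
  · intro n h1 h2
    simp only [List.getElem_take, List.getElem_map, List.getElem_range]
    rw [List.getD_eq_getElem _ 0 (by simp at h1; omega)]

lemma map_getD_range (w : List ℕ) :
    (List.range w.length).map (fun k => w.getD k 0) = w :=
  (take_eq_map_range (le_refl _)).symm.trans (List.take_length (l := w))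

lemma card_filter_range (q : ℕ → Prop) [DecidablePred q] (n : ℕ) :
    ((Finset.range n).filter q).card = (List.range n).countP (fun i => decide (q i)) := by
  induction n with
  | zero => simp
  | succ n ih =>
    rw [Finset.range_add_one, Finset.filter_insert, List.range_succ, List.countP_append]
    by_cases h : q n
    · rw [if_pos h, Finset.card_insert_of_notMem (by simp)]
      simp [List.countP_cons, h, ih]
    · rw [if_neg h]
      simp [List.countP_cons, h, ih]

lemma countP_eq_countP_range (p : ℕ → Bool) (w : List ℕ) :
    w.countP p = (List.range w.length).countP (fun i => p (w.getD i 0)) := by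
  conv_lhs => rw [← map_getD_range w]
  rw [List.countP_map]
  rfl

lemma exists_fact6 {w : List ℕ} (hpk : IsPacked w) (hne : w ≠ []) :
    Fact6 w ([], ((Finset.range w.length).filter (fun i => w.getD i 0 = wmax w)).image (· + 1),
      w.filter (fun a => decide (a < wmax w))) := by
  set M := wmax w with hMdef
  set P : Finset ℕ :=
    ((Finset.range w.length).filter (fun i => w.getD i 0 = M)).image (· + 1) with hPdef
  set x : List ℕ := w.filter (fun a => decide (a < M)) with hxdef
  have hM1 : 1 ≤ M := by
    obtain ⟨a, ha⟩ := List.exists_mem_of_ne_nil w hne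
    exact le_trans (hpk.1 a ha) (le_wmax_of_mem ha)
  have hxmem : ∀ a, a ∈ x ↔ a ∈ w ∧ a < M := by
    intro a; rw [hxdef, List.mem_filter]; simp
  have hwmx : wmax x + 1 = M := by
    have hub : wmax x ≤ M - 1 :=
      wmax_le_of_forall fun a ha => by have := (hxmem a).1 ha; omega
    rcases eq_or_lt_of_le hM1 with h1 | h1
    · omega
    · have : M - 1 ∈ x := (hxmem _).2 ⟨hpk.2 (M - 1) (by omega) (by omega), by omega⟩
      have := le_wmax_of_mem this
      omega
  have hxpacked : IsPacked x := by
    constructor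
    · intro a ha; exact hpk.1 a ((hxmem a).1 ha).1
    · intro i hi hle
      exact (hxmem i).2 ⟨hpk.2 i hi (by omega), by omega⟩
  have hmemP : ∀ i, i + 1 ∈ P ↔ i < w.length ∧ w.getD i 0 = M := by
    intro i
    rw [hPdef]
    simp only [Finset.mem_image, Finset.mem_filter, Finset.mem_range]
    constructor
    · rintro ⟨j, ⟨hj1, hj2⟩, hj3⟩
      have : j = i := by omega
      subst this; exact ⟨hj1, hj2⟩
    · rintro ⟨h1, h2⟩; exact ⟨i, ⟨h1, h2⟩, rfl⟩
  have hPpos : ∀ j ∈ P, 1 ≤ j ∧ j ≤ w.length := by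
    intro j hj
    rw [hPdef] at hj
    simp only [Finset.mem_image, Finset.mem_filter, Finset.mem_range] at hj
    obtain ⟨i, ⟨h1, _⟩, rfl⟩ := hj
    omega
  have hcardP : P.card = (List.range w.length).countP (fun i => decide (w.getD i 0 = M)) := by
    rw [hPdef, Finset.card_image_of_injective _ (add_left_injective 1), card_filter_range]
  have hxlen : x.length = (List.range w.length).countP (fun i => decide (w.getD i 0 < M)) := by
    rw [hxdef, ← List.countP_eq_length_filter, countP_eq_countP_range]
  have hlen : x.length + P.card = w.length := by
    rw [hxlen, hcardP]
    have h1 := List.length_eq_countP_add_countP (fun i => decide (w.getD i 0 = M)) (l := List.range w.length)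
    rw [List.length_range] at h1
    have h2 : (List.range w.length).countP (fun i => decide (w.getD i 0 < M)) =
        (List.range w.length).countP (fun i => decide ¬(decide (w.getD i 0 = M) = true)) := by
      apply List.countP_congr
      intro k _
      have := getD_le_wmax w k
      simp only [decide_eq_true_eq]
      constructor
      · intro h; omega
      · intro h; omega
    rw [h2]
    omega
  have hmain : w = phi P x := by
    apply List.ext_getElem (by rw [length_phi, hlen])
    intro i h1 h2
    rw [phi_getElem _ _ h2]
    have hgd : w.getD i 0 = w[i] := List.getD_eq_getElem _ 0 h1
    by_cases hiM : w.getD i 0 = M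
    · rw [if_pos ((hmemP i).2 ⟨h1, hiM⟩), hwmx, ← hiM, hgd]
    · rw [if_neg (fun hc => hiM ((hmemP i).1 hc).2)]
      have hltM : w.getD i 0 < M := by
        have := getD_le_wmax w i
        omega
      have hcnt : (List.range i).countP (fun k => decide (k + 1 ∉ P)) =
          (w.take i).countP (fun a => decide (a < M)) := by
        rw [take_eq_map_range (le_of_lt h1), List.countP_map]
        apply List.countP_congr
        intro k hk
        have hki : k < i := List.mem_range.1 hk
        have hkw := getD_le_wmax w k
        simp only [Function.comp, decide_eq_true_eq, hmemP k]
        constructor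
        · intro h; omega
        · intro h; omega
      rw [hcnt, filter_getD _ w i h1 (by simpa using hltM), hgd]
  have hPne : P.Nonempty := by
    have hMw : M ∈ w := hpk.2 M hM1 (le_refl _)
    obtain ⟨i, hi, hieq⟩ := List.mem_iff_getElem.1 hMw
    exact ⟨i + 1, (hmemP i).2 ⟨hi, by rw [List.getD_eq_getElem _ 0 hi, hieq]⟩⟩
  refine ⟨isPacked_nil, hxpacked, hPne, ?_, ?_⟩
  · intro j hj
    have h := hPpos j hj
    simp only [Finset.mem_Icc]
    exact ⟨h.1, by rw [← List.countP_eq_length_filter] at hlen ⊢; omega⟩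
  · show w = phi (P.image (· + ([] : List ℕ).length)) (slash [] x)
    have h0 : P.image (· + ([] : List ℕ).length) = P := by simp
    rw [h0, nil_slash]
    exact hmain

/- ## Part A -/
lemma fact6_J_sub {u v : List ℕ} {I : Finset ℕ}
    (hI : I ⊆ Finset.Icc 1 (v.length + I.card)) :
    I.image (· + u.length) ⊆
      Finset.Icc 1 ((slash u v).length + (I.image (· + u.length)).card) := by
  intro j hj
  obtain ⟨a, ha, rfl⟩ := Finset.mem_image.1 hj
  have h1 := Finset.mem_Icc.1 (hI ha)
  rw [Finset.card_image_of_injective _ (add_left_injective u.length), length_slash,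
    Finset.mem_Icc]
  omega

lemma fact6_canonical {w : List ℕ} {t t' : List ℕ × Finset ℕ × List ℕ}
    (h : Fact6 w t) (h' : Fact6 w t') (hl : t.1.length = t'.1.length) : t = t' := by
  obtain ⟨u, I, v⟩ := t
  obtain ⟨u', I', v'⟩ := t'
  obtain ⟨hu, hv, hIne, hIsub, heq⟩ := h
  obtain ⟨hu', hv', hIne', hIsub', heq'⟩ := h'
  simp only at hu hv hIne hIsub heq hu' hv' hIne' hIsub' heq' hl ⊢
  have hJ := fact6_J_sub (u := u) hIsub
  have hJ' := fact6_J_sub (u := u') hIsub'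
  have hcJ : (I.image (· + u.length)).card = I.card :=
    Finset.card_image_of_injective _ (add_left_injective u.length)
  have hcJ' : (I'.image (· + u'.length)).card = I'.card :=
    Finset.card_image_of_injective _ (add_left_injective u'.length)
  obtain ⟨hJJ, hxx⟩ := phi_unique hJ hJ' (hIne.image _) (hIne'.image _) (heq ▸ heq')
  have hII : I = I' := by
    ext a
    constructor
    · intro ha
      have : a + u.length ∈ I'.image (· + u'.length) := hJJ ▸ Finset.mem_image_of_mem _ ha
      obtain ⟨b, hb, hab⟩ := Finset.mem_image.1 this
      have : b = a := by omega
      exact this ▸ hb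
    · intro ha
      have : a + u'.length ∈ I.image (· + u.length) := hJJ ▸ Finset.mem_image_of_mem _ ha
      obtain ⟨b, hb, hab⟩ := Finset.mem_image.1 this
      have : b = a := by omega
      exact this ▸ hb
  have hvv : v = v' := by
    have h1 := congrArg (List.drop u.length) hxx
    rw [slash, slash, List.drop_append_of_le_length (by rw [length_shiftW]),
      List.drop_append_of_le_length (by rw [length_shiftW, hl])] at h1
    have e1 : (shiftW (wmax v) u).drop u.length = [] :=
      List.drop_eq_nil_of_le (by rw [length_shiftW])
    have e2 : (shiftW (wmax v') u').drop u.length = [] :=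
      List.drop_eq_nil_of_le (by rw [length_shiftW, hl])
    rw [e1, e2] at h1
    simpa using h1
  have huu : u = u' := by
    have h1 := congrArg (List.take u.length) hxx
    rw [slash, slash, hvv, List.take_append_of_le_length (by rw [length_shiftW]),
      List.take_append_of_le_length (by rw [length_shiftW, hl])] at h1
    have e1 : (shiftW (wmax v') u).take u.length = shiftW (wmax v') u := by
      conv_lhs => rw [show u.length = (shiftW (wmax v') u).length from (length_shiftW _ _).symm]
      exact List.take_length
    have e2 : (shiftW (wmax v') u').take u.length = shiftW (wmax v') u' := by
      conv_lhs => rw [show u.length = (shiftW (wmax v') u').length from by rw [length_shiftW, hl]]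
      exact List.take_length
    rw [e1, e2] at h1
    exact List.map_injective_iff.2 (add_left_injective (wmax v')) h1
  rw [huu, hII, hvv]

lemma fact6_length_le {w : List ℕ} {t : List ℕ × Finset ℕ × List ℕ}
    (h : Fact6 w t) : t.1.length ≤ w.length := by
  obtain ⟨_, _, _, _, heq⟩ := h
  have := congrArg List.length heq
  rw [length_phi, length_slash] at this
  omega

theorem partA {w : List ℕ} (hw : Irred w) :
    ∃! t : List ℕ × Finset ℕ × List ℕ,
      Fact6 w t ∧ ∀ t', Fact6 w t' → t'.1.length ≤ t.1.length := by
  classical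
  have h0 := exists_fact6 hw.1 hw.2.1
  set Q : ℕ → Prop := fun k => ∃ t, Fact6 w t ∧ t.1.length = k with hQdef
  have hQ0 : Q 0 := ⟨_, h0, rfl⟩
  have hQK : Q (Nat.findGreatest Q w.length) :=
    Nat.findGreatest_spec (Nat.zero_le _) hQ0
  obtain ⟨t₀, ht₀, htl⟩ := hQK
  have hmax : ∀ t', Fact6 w t' → t'.1.length ≤ t₀.1.length := by
    intro t' ht'
    rw [htl]
    exact Nat.le_findGreatest (fact6_length_le ht') ⟨t', ht', rfl⟩
  refine ⟨t₀, ⟨ht₀, hmax⟩, ?_⟩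
  rintro t ⟨ht, hmax'⟩
  exact fact6_canonical ht ht₀ (le_antisymm (hmax _ ht) (hmax' _ ht₀))

/- ## descent decomposition -/
lemma wmax_map_sub (m : ℕ) (z : List ℕ) : wmax (z.map (· - m)) = wmax z - m := by
  induction z with
  | nil => simp [wmax_nil]
  | cons a t ih =>
    simp only [List.map_cons, wmax_cons, ih]
    rw [Nat.max_def, Nat.max_def]
    split_ifs <;> omega

lemma globalDescent_decomp {v : List ℕ} (hv : IsPacked v) {c : ℕ} (hc : GlobalDescent v c) :
    IsPacked ((v.take c).map (· - wmax (v.drop c))) ∧ IsPacked (v.drop c) ∧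
      v = slash ((v.take c).map (· - wmax (v.drop c))) (v.drop c) ∧
      (v.take c) ≠ [] ∧ v.drop c ≠ [] := by
  obtain ⟨hc1, hc2, hlt⟩ := hc
  set m := wmax (v.drop c) with hm
  have hma : ∀ a ∈ v.take c, m < a := fun a ha =>
    wmax_lt_of_forall (hv.1 a (List.take_subset c v ha)) (fun b hb => hlt a ha b hb)
  have hne1 : v.take c ≠ [] := by
    apply List.ne_nil_of_length_pos
    rw [List.length_take]
    omega
  have hne2 : v.drop c ≠ [] := by
    apply List.ne_nil_of_length_pos
    rw [List.length_drop]
    omega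
  have hwv : wmax v = max (wmax (v.take c)) m := by
    conv_lhs => rw [← List.take_append_drop c v]
    rw [wmax_append]
  have heq : v = slash ((v.take c).map (· - m)) (v.drop c) := by
    rw [slash, ← hm, shiftW, List.map_map]
    have : ((· + m) ∘ (· - m)) = fun a => a - m + m := rfl
    rw [this]
    have h2 : (v.take c).map (fun a => a - m + m) = v.take c := by
      rw [show (v.take c) = (v.take c).map id from (List.map_id _).symm]
      rw [List.map_map]
      apply List.map_congr_left
      intro a ha
      simp only [Function.comp, id]
      have := hma a (by simpa using ha)
      omega
    rw [h2, List.take_append_drop]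
  have hpk2 : IsPacked (v.drop c) := by
    constructor
    · exact fun a ha => hv.1 a (List.drop_subset c v ha)
    · intro i hi hile
      have hiv : i ∈ v := hv.2 i hi (le_trans hile (by rw [hwv]; exact le_max_right _ _))
      rw [← List.take_append_drop c v, List.mem_append] at hiv
      rcases hiv with h | h
      · exact absurd hile (by have := hma i h; omega)
      · exact h
  have hpk1 : IsPacked ((v.take c).map (· - m)) := by
    constructor
    · intro a ha
      obtain ⟨b, hb, rfl⟩ := List.mem_map.1 ha
      have := hma b hb
      omega
    · intro i hi hile
      rw [wmax_map_sub] at hile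
      have h1 : i + m ≤ wmax v := by rw [hwv]; omega
      have hiv : i + m ∈ v := hv.2 (i + m) (by omega) h1
      rw [← List.take_append_drop c v, List.mem_append] at hiv
      rcases hiv with h | h
      · exact List.mem_map.2 ⟨i + m, h, by omega⟩
      · have := le_wmax_of_mem h
        omega
  exact ⟨hpk1, hpk2, heq, hne1, hne2⟩

lemma exists_irred_factorization (n : ℕ) : ∀ v : List ℕ, v.length ≤ n → IsPacked v →
    v ≠ [] → ∃ l : List (List ℕ), l ≠ [] ∧ (∀ x ∈ l, Irred x) ∧ v = slashAll l := by
  classical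
  induction n with
  | zero =>
    intro v hlen _ hne
    exact absurd (List.eq_nil_of_length_eq_zero (by omega)) hne
  | succ n ih =>
    intro v hlen hpk hne
    by_cases hirr : ∀ c, ¬ GlobalDescent v c
    · refine ⟨[v], by simp, ?_, ?_⟩
      · intro x hx
        rw [List.mem_singleton] at hx
        subst hx
        exact ⟨hpk, hne, hirr⟩
      · simp [slashAll, slash_nil]
    · push_neg at hirr
      have hex : ∃ c, GlobalDescent v c := hirr
      set c₀ := Nat.find hex with hc₀def
      have hc₀ := Nat.find_spec hex
      obtain ⟨hc1, hc2, hlt⟩ := hc₀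
      obtain ⟨hpk1, hpk2, heq, hne1, hne2⟩ := globalDescent_decomp hpk (Nat.find_spec hex)
      set m := wmax (v.drop c₀) with hm
      set v₁ := (v.take c₀).map (· - m) with hv₁
      -- v₁ is irreducible
      have hma : ∀ x ∈ v.take c₀, m < x := fun x hx =>
        wmax_lt_of_forall (hpk.1 x (List.take_subset c₀ v hx)) (fun b hb => hlt x hx b hb)
      have hirr1 : Irred v₁ := by
        refine ⟨hpk1, fun h => hne1 (by rwa [hv₁, List.map_eq_nil_iff] at h), ?_⟩
        intro d hd
        obtain ⟨hd1, hd2, hdlt⟩ := hd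
        have hlen1 : v₁.length = c₀ := by
          rw [hv₁, List.length_map, List.length_take]
          omega
        have hdc : d < c₀ := by omega
        apply Nat.find_min hex hdc
        refine ⟨hd1, by omega, ?_⟩
        have hta : v.take d = (v.take c₀).take d := by
          rw [List.take_take]
          congr 1
          omega
        have hsplit : v.drop d = (v.take c₀).drop d ++ v.drop c₀ := by
          conv_lhs => rw [← List.take_append_drop c₀ v]
          rw [List.drop_append_of_le_length (by rw [List.length_take]; omega)]
        intro a ha b hb
        have hac₀ : a ∈ v.take c₀ := by
          rw [hta] at ha
          exact List.take_subset d _ ha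
        rw [hsplit, List.mem_append] at hb
        rcases hb with hb | hb
        · have hbc₀ : b ∈ v.take c₀ := List.drop_subset d _ hb
          have ha' : a - m ∈ v₁.take d := by
            rw [hv₁, ← List.map_take]
            exact List.mem_map.2 ⟨a, by rw [← hta]; exact ha, rfl⟩
          have hb' : b - m ∈ v₁.drop d := by
            rw [hv₁, ← List.map_drop]
            exact List.mem_map.2 ⟨b, hb, rfl⟩
          have h1 := hdlt _ ha' _ hb'
          have h2 := hma a hac₀
          have h3 := hma b hbc₀
          omega
        · exact hlt a hac₀ b hb
      have hlenv₂ : (v.drop c₀).length ≤ n := by rw [List.length_drop]; omega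
      obtain ⟨l₂, hl₂ne, hl₂irr, hl₂eq⟩ := ih (v.drop c₀) hlenv₂ hpk2 hne2
      refine ⟨v₁ :: l₂, by simp, ?_, ?_⟩
      · intro x hx
        rcases List.mem_cons.1 hx with rfl | hx
        · exact hirr1
        · exact hl₂irr x hx
      · rw [slashAll_cons, ← hl₂eq]
        exact heq

/- ## Part B -/
lemma getLastI_concat (L : List (List ℕ)) (b : List ℕ) : (L ++ [b]).getLastI = b := by
  rw [List.getLastI_eq_getLast?, List.getLast?_concat, Option.getD_some]

lemma claim1_aux {w u v : List ℕ} {I : Finset ℕ} (hf : Fact6 w (u, I, v))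
    (hmax : ∀ t', Fact6 w t' → t'.1.length ≤ u.length)
    {v₁ : List ℕ} {l' : List (List ℕ)} (hv₁ : Irred v₁) (hl' : ∀ x ∈ l', IsPacked x)
    (hveq : v = slash v₁ (slashAll l'))
    (hgt : ∀ j ∈ I, v₁.length < j) : False := by
  obtain ⟨hu, hv, hIne, hIsub, heq⟩ := hf
  simp only at hu hv hIne hIsub heq
  set v₂ := slashAll l' with hv₂
  have hpkv₂ : IsPacked v₂ := isPacked_slashAll hl'
  have hvlen : v.length = v₁.length + v₂.length := by rw [hveq, length_slash]
  have hcard : (I.image (· - v₁.length)).card = I.card := by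
    apply Finset.card_image_of_injOn
    intro a ha b hb hab
    have h1 := hgt a ha
    have h2 := hgt b hb
    simp only at hab
    omega
  have hfact : Fact6 w (slash u v₁, I.image (· - v₁.length), v₂) := by
    refine ⟨hu.slash hv₁.1, hpkv₂, hIne.image _, ?_, ?_⟩
    · intro j hj
      obtain ⟨a, ha, rfl⟩ := Finset.mem_image.1 hj
      have h1 := Finset.mem_Icc.1 (hIsub ha)
      have h2 := hgt a ha
      simp only [hcard, Finset.mem_Icc]
      omega
    · show w = phi ((I.image (· - v₁.length)).image (· + (slash u v₁).length))
        (slash (slash u v₁) v₂)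
      rw [slash_assoc, ← hveq]
      have himg : (I.image (· - v₁.length)).image (· + (slash u v₁).length) =
          I.image (· + u.length) := by
        rw [Finset.image_image]
        apply Finset.image_congr
        intro a ha
        simp only [Finset.coe_image, Function.comp] at ha ⊢
        have := hgt a (by simpa using ha)
        rw [length_slash]
        omega
      rw [himg]
      exact heq
  have hlen := hmax _ hfact
  simp only [length_slash] at hlen
  have : v₁.length ≠ 0 := fun h => hv₁.2.1 (List.eq_nil_of_length_eq_zero h)
  omega

lemma claim2_aux {w u v : List ℕ} {I : Finset ℕ} (hw : Irred w) (hf : Fact6 w (u, I, v))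
    {y z : List ℕ} (hz : Irred z) (hy : IsPacked y) (hveq : v = slash y z)
    (hple : ∀ j ∈ I, j + z.length ≤ v.length + I.card) : False := by
  obtain ⟨hu, hv, hIne, hIsub, heq⟩ := hf
  set J : Finset ℕ := I.image (· + u.length) with hJ
  set x : List ℕ := slash u v with hx
  have hcJ : J.card = I.card := Finset.card_image_of_injective _ (add_left_injective u.length)
  have hJsub : J ⊆ Finset.Icc 1 (x.length + J.card) := fact6_J_sub hIsub
  have hxlen : x.length = u.length + v.length := length_slash u v
  set N := x.length + J.card with hN
  have hwlen : w.length = N := by rw [heq, length_phi]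
  have hzlen : 1 ≤ z.length := by
    have := hz.2.1
    cases hzl : z.length with
    | zero => exact absurd (List.eq_nil_of_length_eq_zero hzl) this
    | succ n => omega
  have hvyz : v.length = y.length + z.length := by rw [hveq, length_slash]
  set c := N - z.length with hc
  have hq1 : 1 ≤ I.card := Finset.card_pos.2 hIne
  have hJc : ∀ j ∈ J, j ≤ c := by
    intro j hj
    obtain ⟨a, ha, rfl⟩ := Finset.mem_image.1 hj
    have := hple a ha
    omega
  -- x = (shiftW (wmax z) (slash u y)) ++ z
  have hxsplit : x = shiftW (wmax z) (slash u y) ++ z := by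
    rw [hx, hveq, ← slash_assoc, slash]
  have hleftlen : (shiftW (wmax z) (slash u y)).length = u.length + y.length := by
    rw [length_shiftW, length_slash]
  have hwmaxzx : wmax z ≤ wmax x := by
    rw [hxsplit, wmax_append]
    exact le_max_right _ _
  -- entries of the tail
  have hdrople : ∀ b ∈ w.drop c, b ≤ wmax z := by
    intro b hb
    obtain ⟨s, hs, hbs⟩ := List.mem_iff_getElem.1 hb
    rw [List.getElem_drop] at hbs
    have hslen : s < N - c := by
      rw [List.length_drop, hwlen] at hs
      omega
    have hcs : c + s < (phi J x).length := by rw [length_phi]; omega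
    have hni : c + s + 1 ∉ J := fun hmem => by have := hJc _ hmem; omega
    have hJsub2 : J ⊆ Finset.Icc 1 (c + s) := by
      intro j hj
      exact Finset.mem_Icc.2 ⟨(Finset.mem_Icc.1 (hJsub hj)).1, le_trans (hJc j hj) (by omega)⟩
    have hcnt : (List.range (c + s)).countP (fun k => decide (k + 1 ∉ J)) = c + s - J.card := by
      rw [countP_range_not_mem, Finset.inter_eq_left.2 hJsub2]
    have hb2 : b = x.getD (c + s - J.card) 0 := by
      rw [← hbs, List.getElem_of_eq heq, phi_getElem _ _ hcs, if_neg hni, hcnt]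
    have htlt : c + s - J.card < x.length := by omega
    rw [List.getD_eq_getElem _ 0 htlt] at hb2
    have hmemz : x[c + s - J.card]'htlt ∈ z := by
      have e := List.getElem_of_eq hxsplit htlt
      rw [List.getElem_append_right (by rw [hleftlen]; omega)] at e
      rw [e]
      exact List.getElem_mem _
    rw [hb2]
    exact le_wmax_of_mem hmemz
  have htakegt : ∀ a ∈ w.take c, wmax z < a := by
    intro a ha
    obtain ⟨s, hs, has⟩ := List.mem_iff_getElem.1 ha
    rw [List.getElem_take] at has
    have hslen : s < c := by
      rw [List.length_take] at hs
      omega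
    have hsN : s < (phi J x).length := by rw [length_phi]; omega
    have ha2 : a = (phi J x)[s]'hsN := by rw [← has]; exact List.getElem_of_eq heq _
    rw [phi_getElem _ _ hsN] at ha2
    by_cases hmem : s + 1 ∈ J
    · rw [if_pos hmem] at ha2
      have := wmax_phi (hIne.image _) hJsub
      omega
    · rw [if_neg hmem] at ha2
      -- bound the index
      have hcard1 : (J ∩ Finset.Icc 1 s).card ≤ s := card_inter_Icc_le J s
      have hcard2 : J.card ≤ (J ∩ Finset.Icc 1 s).card + (c - s - 1) := by
        have hsub : J ⊆ (J ∩ Finset.Icc 1 s) ∪ Finset.Icc (s + 2) c := by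
          intro j hj
          have hj1 := (Finset.mem_Icc.1 (hJsub hj)).1
          have hj2 := hJc j hj
          rcases le_or_gt j s with h | h
          · exact Finset.mem_union.2 (Or.inl (Finset.mem_inter.2 ⟨hj, Finset.mem_Icc.2 ⟨hj1, h⟩⟩))
          · refine Finset.mem_union.2 (Or.inr (Finset.mem_Icc.2 ⟨?_, hj2⟩))
            rcases eq_or_ne j (s + 1) with rfl | hne
            · exact absurd hj hmem
            · omega
        have := le_trans (Finset.card_le_card hsub) (Finset.card_union_le _ _)
        rw [Nat.card_Icc] at this
        omega
      rw [countP_range_not_mem] at ha2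
      set t := s - (J ∩ Finset.Icc 1 s).card with ht
      have htlt : t < u.length + y.length := by omega
      have htx : t < x.length := by omega
      rw [List.getD_eq_getElem _ 0 htx] at ha2
      have e := List.getElem_of_eq hxsplit htx
      rw [List.getElem_append_left (by rw [hleftlen]; omega)] at e
      rw [e] at ha2
      have hmem2 : a ∈ shiftW (wmax z) (slash u y) := ha2 ▸ List.getElem_mem _
      obtain ⟨b, hb, rfl⟩ := List.mem_map.1 hmem2
      have hbpos : 0 < b := (hu.slash hy).1 b hb
      omega
  exact hw.2.2 c ⟨by omega, by omega, fun a ha b hb => lt_of_le_of_lt (hdrople b hb) (htakegt a ha)⟩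

theorem unique_maximal_phi_factorization (w : List ℕ) (hw : Irred w) :
    (∃! t : List ℕ × Finset ℕ × List ℕ,
        Fact6 w t ∧ ∀ t', Fact6 w t' → t'.1.length ≤ t.1.length) ∧
    (∀ u : List ℕ, ∀ I : Finset ℕ, ∀ v : List ℕ,
      Fact6 w (u, I, v) → (∀ t', Fact6 w t' → t'.1.length ≤ u.length) →
      ((v = [] ∧ I = Finset.Icc 1 I.card) ∨
       (∃ l : List (List ℕ), l ≠ [] ∧ (∀ x ∈ l, Irred x) ∧ v = slashAll l ∧
        ∃ i₁ ∈ I, ∃ iₚ ∈ I, (∀ j ∈ I, i₁ ≤ j ∧ j ≤ iₚ) ∧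
          i₁ ≤ l.headI.length ∧
          v.length + I.card + 1 - iₚ ≤ l.getLastI.length))) := by
  refine ⟨partA hw, ?_⟩
  intro u I v hf hmaxu
  have hIne : I.Nonempty := hf.2.2.1
  have hIsub : I ⊆ Finset.Icc 1 (v.length + I.card) := hf.2.2.2.1
  by_cases hv : v = []
  · subst hv
    left
    refine ⟨rfl, Finset.eq_of_subset_of_card_le ?_ (by rw [Nat.card_Icc]; omega)⟩
    intro j hj
    have := Finset.mem_Icc.1 (hIsub hj)
    simp only [List.length_nil, Nat.zero_add] at this
    exact Finset.mem_Icc.2 this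
  · right
    obtain ⟨l, hlne, hlirr, hleq⟩ :=
      exists_irred_factorization v.length v (le_refl _) hf.2.1 hv
    refine ⟨l, hlne, hlirr, hleq, I.min' hIne, I.min'_mem hIne, I.max' hIne, I.max'_mem hIne,
      fun j hj => ⟨I.min'_le j hj, I.le_max' j hj⟩, ?_, ?_⟩
    · by_contra hcon
      push_neg at hcon
      obtain ⟨a, l', rfl⟩ := List.exists_cons_of_ne_nil hlne
      have hcon' : a.length < I.min' hIne := hcon
      apply claim1_aux (v₁ := a) (l' := l') hf hmaxu (hlirr a (by simp))
        (fun x hx => (hlirr x (by simp [hx])).1) (by rw [hleq, slashAll_cons])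
      intro j hj
      have := I.min'_le j hj
      omega
    · by_contra hcon
      push_neg at hcon
      rcases List.eq_nil_or_concat l with rfl | ⟨L, b, hlc⟩
      · exact hlne rfl
      · rw [List.concat_eq_append] at hlc
        subst hlc
        rw [getLastI_concat] at hcon
        have hyeq : v = slash (slashAll L) b := by
          rw [hleq, slashAll_append]
          congr 1
          show slashAll [b] = b
          rw [slashAll_cons]
          show slash b [] = b
          exact slash_nil b
        apply claim2_aux hw hf (hlirr b (by simp))
          (isPacked_slashAll (fun x hx => (hlirr x (by simp [hx])).1)) hyeq
        intro j hj
        have hjm := I.le_max' j hj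
        have hmI := Finset.mem_Icc.1 (hIsub (I.max'_mem hIne))
        omega
end
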